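/- Let f: ℝᵈ → ℝ be convex and L-smooth with minimizer w*. Consider the iteration w₀ = 0, wₖ₊₁ = wₖ - gₖ/(2L) where each gₖ satisfies ‖gₖ - ∇f(wₖ)‖ ≤ ε and ‖gₖ‖ ≥ 4ε for k = 0, ..., K-1. Suppose additionally that f(wₖ) - f(w*) ≥ ε‖w*‖ for all k ∈ [1, K]. Then ‖wₖ - w*‖ ≤ ‖w*‖ for all k ∈ [0, K]. -/

import Mathlib

section AuxGD

open Set

variable {d : ℕ}

local notation "E" => EuclideanSpace ℝ (Fin d)

lemma line_deriv (f : E → ℝ) (f' : E → E) (hf' : ∀ x, HasGradientAt f (f' x) x)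
    (x v : E) (t : ℝ) :
    HasDerivAt (fun s : ℝ => f (x + s • v)) (inner ℝ (f' (x + t • v)) v : ℝ) t := by
  have h1 : HasDerivAt (fun s : ℝ => x + s • v) v t := by
    simpa using ((hasDerivAt_id t).smul_const v).const_add x
  have h2 := (hf' (x + t • v)).hasFDerivAt
  have h3 := h2.comp_hasDerivAt t h1
  simp only [InnerProductSpace.toDual_apply_apply] at h3
  exact h3

lemma grad_convex_ineq (f : E → ℝ) (f' : E → E) (hf' : ∀ x, HasGradientAt f (f' x) x)
    (hconv : ConvexOn ℝ Set.univ f) (x y : E) :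
    f x + (inner ℝ (f' x) (y - x) : ℝ) ≤ f y := by
  set v := y - x with hv
  have hφ : ConvexOn ℝ Set.univ fun t : ℝ => f (x + t • v) := by
    have h := hconv.comp_affineMap (AffineMap.lineMap x y : ℝ →ᵃ[ℝ] E)
    simp only [Set.preimage_univ] at h
    have he : (f ∘ (AffineMap.lineMap x y : ℝ →ᵃ[ℝ] E)) = fun t : ℝ => f (x + t • v) := by
      funext t
      simp only [Function.comp_apply, AffineMap.lineMap_apply_module, hv]
      congr 1
      module
    rwa [he] at h
  have hd := (line_deriv f f' hf' x v 0).hasDerivWithinAt (s := Ioi (0:ℝ))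
  rw [zero_smul, add_zero] at hd
  have hs := hφ.le_slope_of_hasDerivWithinAt_Ioi (mem_univ (0:ℝ)) (mem_univ (1:ℝ)) one_pos hd
  have h01 : slope (fun t : ℝ => f (x + t • v)) 0 1 = f y - f x := by
    rw [slope_def_field]
    rw [one_smul, zero_smul, add_zero, hv, add_sub_cancel]
    norm_num
  rw [h01] at hs
  linarith

lemma descent_lemma (f : E → ℝ) (f' : E → E) (hf' : ∀ x, HasGradientAt f (f' x) x)
    (L : ℝ) (hL : 0 < L) (hsmooth : ∀ x y, ‖f' x - f' y‖ ≤ L * ‖x - y‖) (x y : E) :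
    f y ≤ f x + (inner ℝ (f' x) (y - x) : ℝ) + L / 2 * ‖y - x‖ ^ 2 := by
  set v := y - x with hv
  set ψ : ℝ → ℝ := fun t => f (x + t • v) - t * (inner ℝ (f' x) v : ℝ) - L / 2 * t ^ 2 * ‖v‖ ^ 2
    with hψdef
  have hψ : ∀ t : ℝ, HasDerivAt ψ
      ((inner ℝ (f' (x + t • v)) v : ℝ) - (inner ℝ (f' x) v : ℝ) - L * t * ‖v‖ ^ 2) t := by
    intro t
    have h1 := line_deriv f f' hf' x v t
    have h2 : HasDerivAt (fun t : ℝ => t * (inner ℝ (f' x) v : ℝ)) (inner ℝ (f' x) v : ℝ) t := by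
      simpa using (hasDerivAt_id t).mul_const (inner ℝ (f' x) v : ℝ)
    have h3 : HasDerivAt (fun t : ℝ => L / 2 * t ^ 2 * ‖v‖ ^ 2) (L * t * ‖v‖ ^ 2) t := by
      have := ((hasDerivAt_pow 2 t).const_mul (L / 2)).mul_const (‖v‖ ^ 2)
      convert this using 1
      · rfl
      · rfl
      · rw [show (2:ℕ) - 1 = 1 from rfl, pow_one]; push_cast; ring
    exact (h1.sub h2).sub h3
  have hanti : AntitoneOn ψ (Icc (0:ℝ) 1) := by
    apply antitoneOn_of_deriv_nonpos (convex_Icc 0 1)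
    · exact fun t _ => ((hψ t).differentiableAt).continuousAt.continuousWithinAt
    · exact fun t _ => ((hψ t).differentiableAt).differentiableWithinAt
    · intro t ht
      rw [interior_Icc] at ht
      rw [(hψ t).deriv]
      have hb : (inner ℝ (f' (x + t • v) - f' x) v : ℝ) ≤ L * t * ‖v‖ ^ 2 := by
        calc (inner ℝ (f' (x + t • v) - f' x) v : ℝ)
            ≤ ‖f' (x + t • v) - f' x‖ * ‖v‖ := real_inner_le_norm _ _
          _ ≤ (L * ‖(x + t • v) - x‖) * ‖v‖ := by
              have := hsmooth (x + t • v) x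
              exact mul_le_mul_of_nonneg_right this (norm_nonneg _)
          _ = L * t * ‖v‖ ^ 2 := by
              rw [add_sub_cancel_left, norm_smul, Real.norm_eq_abs,
                abs_of_pos ht.1]
              ring
      rw [inner_sub_left] at hb
      linarith
  have := hanti (left_mem_Icc.mpr zero_le_one) (right_mem_Icc.mpr zero_le_one) zero_le_one
  have h0 : ψ 0 = f x := by simp [hψdef]
  have h1 : ψ 1 = f y - (inner ℝ (f' x) v : ℝ) - L / 2 * ‖v‖ ^ 2 := by
    simp [hψdef, hv]
  rw [h0, h1] at this
  linarith

end AuxGD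

/-- If the approximate-gradient iterates keep a sub-optimality gap at least
`ε‖w*`‖ during steps `1, ..., K`, then `‖wₖ - w*‖ ≤ ‖w*‖` for all `k ∈ [0, K]`. -/
theorem stmt_9 {d : ℕ} (f : EuclideanSpace ℝ (Fin d) → ℝ)
    (f' : EuclideanSpace ℝ (Fin d) → EuclideanSpace ℝ (Fin d))
    (hf' : ∀ x, HasGradientAt f (f' x) x)
    (hconv : ConvexOn ℝ Set.univ f)
    (L : ℝ) (hL : 0 < L)
    (hsmooth : ∀ x y, ‖f' x - f' y‖ ≤ L * ‖x - y‖)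
    (wstar : EuclideanSpace ℝ (Fin d)) (hmin : ∀ x, f wstar ≤ f x)
    (ε : ℝ) (hε : 0 ≤ ε) (K : ℕ)
    (w g : ℕ → EuclideanSpace ℝ (Fin d))
    (hw0 : w 0 = 0)
    (hstep : ∀ k < K, w (k + 1) = w k - (1 / (2 * L)) • g k)
    (hg : ∀ k < K, ‖g k - f' (w k)‖ ≤ ε)
    (hgnorm : ∀ k < K, 4 * ε ≤ ‖g k‖)
    (hgap : ∀ k, 1 ≤ k → k ≤ K → ε * ‖wstar‖ ≤ f (w k) - f wstar) :
    ∀ k ≤ K, ‖w k - wstar‖ ≤ ‖wstar‖ := by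
  intro k hk
  induction k with
  | zero => simp [hw0]
  | succ n ih =>
    have hnK : n < K := hk
    have ihb : ‖w n - wstar‖ ≤ ‖wstar‖ := ih hnK.le
    obtain ⟨s, hs⟩ : ∃ s : ℝ, s = 1 / (2 * L) := ⟨_, rfl⟩
    have hstepn0 : ∀ k < K, w (k + 1) = w k - s • g k := by
      intro k hk'; rw [hstep k hk', hs]
    have hs0 : 0 < s := by rw [hs]; positivity
    have hLs : L * s = 1 / 2 := by rw [hs]; field_simp
    set a := w n - wstar with ha
    set gn := g n with hgn
    -- step equation
    have hstepn : w (n + 1) - wstar = a - s • gn := by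
      rw [hstepn0 n hnK, ha, hgn]; abel
    -- norm expansion
    have e1 : ‖w (n + 1) - wstar‖ ^ 2
        = ‖a‖ ^ 2 - 2 * (s * (inner ℝ gn a : ℝ)) + s ^ 2 * ‖gn‖ ^ 2 := by
      rw [hstepn, norm_sub_sq_real, real_inner_smul_right, norm_smul, Real.norm_eq_abs,
        abs_of_pos hs0, mul_pow, real_inner_comm]
    -- error bounds
    have herr : ‖gn - f' (w n)‖ ≤ ε := hg n hnK
    have hea : (inner ℝ (gn - f' (w n)) a : ℝ) ≥ -(ε * ‖a‖) := by
      have h1 : |(inner ℝ (gn - f' (w n)) a : ℝ)| ≤ ‖gn - f' (w n)‖ * ‖a‖ :=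
        abs_real_inner_le_norm _ _
      have h2 : ‖gn - f' (w n)‖ * ‖a‖ ≤ ε * ‖a‖ :=
        mul_le_mul_of_nonneg_right herr (norm_nonneg _)
      have := neg_abs_le (inner ℝ (gn - f' (w n)) a : ℝ)
      linarith
    have heg : (inner ℝ (gn - f' (w n)) gn : ℝ) ≤ ε * ‖gn‖ := by
      have h1 := abs_real_inner_le_norm (gn - f' (w n)) gn
      have h2 : ‖gn - f' (w n)‖ * ‖gn‖ ≤ ε * ‖gn‖ :=
        mul_le_mul_of_nonneg_right herr (norm_nonneg _)
      have := le_abs_self (inner ℝ (gn - f' (w n)) gn : ℝ)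
      linarith
    -- convexity: inner ℝ (f' (w n)) a ≥ f (w n) - f wstar
    have e2 : (inner ℝ gn a : ℝ) ≥ f (w n) - f wstar - ε * ‖a‖ := by
      have hc := grad_convex_ineq f f' hf' hconv (w n) wstar
      have hrw : wstar - w n = -a := by rw [ha]; abel
      rw [hrw, inner_neg_right] at hc
      have hsplit : (inner ℝ gn a : ℝ)
          = (inner ℝ (f' (w n)) a : ℝ) + (inner ℝ (gn - f' (w n)) a : ℝ) := by
        rw [inner_sub_left]; ring
      linarith
    -- descent
    have e3 : f (w (n + 1)) ≤ f (w n) - s * (‖gn‖ ^ 2 - ε * ‖gn‖) + L / 2 * s ^ 2 * ‖gn‖ ^ 2 := by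
      have hd := descent_lemma f f' hf' L hL hsmooth (w n) (w (n + 1))
      have hdiff : w (n + 1) - w n = -(s • gn) := by rw [hstepn0 n hnK]; abel
      rw [hdiff, inner_neg_right, real_inner_smul_right, norm_neg, norm_smul,
        Real.norm_eq_abs, abs_of_pos hs0, mul_pow] at hd
      have hsplit : (inner ℝ (f' (w n)) gn : ℝ)
          = ‖gn‖ ^ 2 - (inner ℝ (gn - f' (w n)) gn : ℝ) := by
        rw [inner_sub_left, real_inner_self_eq_norm_sq]; ring
      nlinarith [hs0.le, heg]
    have hG4 : 4 * ε ≤ ‖gn‖ := hgnorm n hnK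
    have e4 : ε * ‖gn‖ ≤ ‖gn‖ ^ 2 / 4 := by nlinarith [norm_nonneg gn]
    -- combine e3, e4: f (w (n+1)) ≤ f (w n) - s/2 * ‖gn‖^2, using L/2*s^2 = s/4
    have hLs2 : L / 2 * s ^ 2 = s / 4 := by
      have h : L / 2 * s ^ 2 = L * s * s / 2 := by ring
      rw [h, hLs]; ring
    have e3' : f (w (n + 1)) ≤ f (w n) - s / 2 * ‖gn‖ ^ 2 := by
      rw [hLs2] at e3
      have h6 : s * (ε * ‖gn‖) ≤ s * (‖gn‖ ^ 2 / 4) := mul_le_mul_of_nonneg_left e4 hs0.le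
      have h7 : s * (‖gn‖ ^ 2 - ε * ‖gn‖) = s * ‖gn‖ ^ 2 - s * (ε * ‖gn‖) := by ring
      have h8 : s * (‖gn‖ ^ 2 / 4) = s / 4 * ‖gn‖ ^ 2 := by ring
      have h9 : s / 4 * ‖gn‖ ^ 2 + s / 4 * ‖gn‖ ^ 2 + s / 2 * ‖gn‖ ^ 2 = s * ‖gn‖ ^ 2 := by ring
      linarith
    -- gap
    have e5 : ε * ‖wstar‖ ≤ f (w (n + 1)) - f wstar := hgap (n + 1) (Nat.le_add_left 1 n) hk
    have heA : ε * ‖a‖ ≤ f (w (n + 1)) - f wstar := by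
      have := mul_le_mul_of_nonneg_left ihb hε
      linarith
    -- final
    have hsq : ‖w (n + 1) - wstar‖ ^ 2 ≤ ‖a‖ ^ 2 := by
      rw [e1]
      have ht : s / 2 * ‖gn‖ ^ 2 ≤ f (w n) - f (w (n + 1)) := by linarith
      have ht2 : 2 * s * (s / 2 * ‖gn‖ ^ 2) ≤ 2 * s * (f (w n) - f (w (n + 1))) :=
        mul_le_mul_of_nonneg_left ht (by positivity)
      have ht3 : 2 * s * (s / 2 * ‖gn‖ ^ 2) = s ^ 2 * ‖gn‖ ^ 2 := by ring
      have t2 : s * (f (w n) - f wstar - ε * ‖a‖) ≤ s * (inner ℝ gn a : ℝ) :=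
        mul_le_mul_of_nonneg_left e2.le hs0.le
      have hA2 : s * (ε * ‖a‖) ≤ s * (f (w (n + 1)) - f wstar) :=
        mul_le_mul_of_nonneg_left heA hs0.le
      have hr1 : s * (f (w n) - f wstar - ε * ‖a‖)
          = s * f (w n) - s * f wstar - s * (ε * ‖a‖) := by ring
      have hr2 : 2 * s * (f (w n) - f (w (n + 1)))
          = 2 * (s * f (w n)) - 2 * (s * f (w (n + 1))) := by ring
      have hr3 : s * (f (w (n + 1)) - f wstar) = s * f (w (n + 1)) - s * f wstar := by ring
      linarith
    calc ‖w (n + 1) - wstar‖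
        = Real.sqrt (‖w (n + 1) - wstar‖ ^ 2) := (Real.sqrt_sq (norm_nonneg _)).symm
      _ ≤ Real.sqrt (‖a‖ ^ 2) := Real.sqrt_le_sqrt hsq
      _ = ‖a‖ := Real.sqrt_sq (norm_nonneg _)
      _ ≤ ‖wstar‖ := ihb
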